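/- Let K be a field and A a commutative K-algebra which is an integral domain. Assume that every zero divisor of the tensor product A ⊗_K A is nilpotent. Then K is separably closed in the fraction field Q of A: every element α ∈ Q which is algebraic and separable over K already lies in K. Consequently Spec A is geometrically irreducible over K. -/

import Mathlib

set_option maxHeartbeats 1000000
set_option synthInstance.maxHeartbeats 200000

open TensorProduct

section AuxiliaryLemmas
open Polynomial

section Aux

variable {K : Type*} [Field K]

lemma li_baseChange {Q B : Type*} [Field Q] [AddCommGroup B] [Module K B] [Algebra K Q]
    {n : ℕ} {v : Fin n → B} (hv : LinearIndependent K v) :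
    LinearIndependent Q (fun i => (1 : Q) ⊗ₜ[K] v i) := by
  classical
  have hs : LinearIndepOn K id (Set.range v) := (linearIndepOn_id_range_iff hv.injective).mpr hv
  let b := Module.Basis.extend hs
  have hb := (b.baseChange Q).linearIndependent
  have hmem : ∀ i : Fin n, v i ∈ hs.extend (Set.subset_univ _) :=
    fun i => hs.subset_extend _ ⟨i, rfl⟩
  have hinj : Function.Injective
      (fun i : Fin n => (⟨v i, hmem i⟩ : hs.extend (Set.subset_univ _))) := by
    intro i j hij
    exact hv.injective (by simpa using congrArg Subtype.val hij)
  have h2 := hb.comp _ hinj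
  convert h2 with i
  simp only [Function.comp_apply, Module.Basis.baseChange_apply, b, Module.Basis.extend_apply_self]

lemma aeval_one_tmul_dvd {Q B : Type*} [Field Q] [CommRing B] [Nontrivial B]
    [Algebra K Q] [Algebra K B]
    {θ : B} (hθ : IsIntegral K θ) {p : Polynomial Q}
    (hp : Polynomial.aeval ((1 : Q) ⊗ₜ[K] θ : Q ⊗[K] B) p = 0) :
    (minpoly K θ).map (algebraMap K Q) ∣ p := by
  classical
  set f : Polynomial Q := (minpoly K θ).map (algebraMap K Q) with hf
  have hmon : f.Monic := (minpoly.monic hθ).map _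
  set x : Q ⊗[K] B := (1 : Q) ⊗ₜ[K] θ with hxdef
  have hx : x = Algebra.TensorProduct.includeRight θ := rfl
  have hfx : Polynomial.aeval x f = 0 := by
    rw [hf, Polynomial.aeval_map_algebraMap, hx, Polynomial.aeval_algHom_apply,
      minpoly.aeval, map_zero]
  set n : ℕ := (minpoly K θ).natDegree with hn
  have hndeg : f.natDegree = n := Polynomial.natDegree_map _
  have key : p %ₘ f = 0 := by
    by_contra hr
    set r : Polynomial Q := p %ₘ f with hrdef
    have hdeg : r.natDegree < n := by
      rw [← hndeg]
      exact Polynomial.natDegree_lt_natDegree hr (Polynomial.degree_modByMonic_lt p hmon)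
    have hev : Polynomial.aeval x r = 0 := by
      have h1 := Polynomial.modByMonic_add_div p f
      have h2 : Polynomial.aeval x (p %ₘ f + f * (p /ₘ f)) = Polynomial.aeval x p :=
        congrArg _ h1
      rw [map_add, map_mul, hfx, zero_mul, add_zero, hp] at h2
      exact h2
    have hsum : ∑ i ∈ Finset.range n, r.coeff i • x ^ i = 0 := by
      rw [← Polynomial.aeval_eq_sum_range' hdeg, hev]
    have hli : LinearIndependent Q (fun i : Fin n => (1 : Q) ⊗ₜ[K] (θ ^ (i : ℕ))) :=
      li_baseChange (by rw [hn]; exact linearIndependent_pow θ)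
    have hcoeff : ∀ i : Fin n, r.coeff i = 0 := by
      have hsum2 : ∑ i : Fin n, r.coeff (i : ℕ) • ((1 : Q) ⊗ₜ[K] (θ ^ (i : ℕ))) = 0 := by
        rw [← hsum, ← Fin.sum_univ_eq_sum_range (fun i => r.coeff i • x ^ i)]
        refine Finset.sum_congr rfl fun i _ => ?_
        congr 1
        rw [hxdef, Algebra.TensorProduct.tmul_pow, one_pow]
      exact Fintype.linearIndependent_iff.mp hli (fun i => r.coeff i) hsum2
    apply hr
    ext i
    by_cases hi : i < n
    · simpa using hcoeff ⟨i, hi⟩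
    · simp [Polynomial.coeff_eq_zero_of_natDegree_lt (lt_of_lt_of_le hdeg (not_lt.mp hi))]
  exact (Polynomial.modByMonic_eq_zero_iff_dvd hmon).mp key

end Aux

section Aux2
variable {K : Type*} [Field K]

lemma tensorMap_injective {B C D E : Type*} [CommRing B] [CommRing C] [CommRing D] [CommRing E]
    [Algebra K B] [Algebra K C] [Algebra K D] [Algebra K E]
    (f : B →ₐ[K] C) (g : D →ₐ[K] E) (hf : Function.Injective f) (hg : Function.Injective g) :
    Function.Injective (Algebra.TensorProduct.map f g) := by
  have hcomp : ∀ x : B ⊗[K] D, Algebra.TensorProduct.map f g x =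
      LinearMap.rTensor E f.toLinearMap (LinearMap.lTensor B g.toLinearMap x) := by
    intro x
    induction x using TensorProduct.induction_on with
    | zero => simp
    | tmul b d => simp
    | add x y hx hy => simp only [map_add, hx, hy]
  intro x y hxy
  rw [hcomp, hcomp] at hxy
  exact Module.Flat.lTensor_preserves_injective_linearMap _ hg
    (Module.Flat.rTensor_preserves_injective_linearMap _ hf hxy)

lemma tensor_nontrivial (S B : Type*) [CommRing S] [Nontrivial S] [Algebra K S]
    [AddCommGroup B] [Module K B] [Nontrivial B] : Nontrivial (S ⊗[K] B) := by
  let b := Module.Basis.ofVectorSpace K B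
  have : Nonempty (Module.Basis.ofVectorSpaceIndex K B) := b.index_nonempty
  exact (b.baseChange S).repr.toEquiv.nontrivial

end Aux2

section Frac
variable {K : Type*} [Field K] {A : Type*} [CommRing A] [IsDomain A] [Algebra K A]

lemma isUnit_tmul_frac (a b : A) (ha : a ≠ 0) (hb : b ≠ 0) :
    IsUnit ((algebraMap A (FractionRing A) a) ⊗ₜ[K] (algebraMap A (FractionRing A) b)) := by
  have ha' : IsUnit (algebraMap A (FractionRing A) a) := by
    rw [isUnit_iff_ne_zero, Ne, IsFractionRing.to_map_eq_zero_iff]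
    exact ha
  have hb' : IsUnit (algebraMap A (FractionRing A) b) := by
    rw [isUnit_iff_ne_zero, Ne, IsFractionRing.to_map_eq_zero_iff]
    exact hb
  have heq : (algebraMap A (FractionRing A) a) ⊗ₜ[K] (algebraMap A (FractionRing A) b) =
      (Algebra.TensorProduct.includeLeft (S := K) (algebraMap A (FractionRing A) a)) *
      (Algebra.TensorProduct.includeRight (algebraMap A (FractionRing A) b)) := by
    simp [Algebra.TensorProduct.tmul_mul_tmul]
  rw [heq]
  exact (ha'.map _).mul (hb'.map _)

lemma exists_clearDenom (u : FractionRing A ⊗[K] FractionRing A) :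
    ∃ (a b : A) (z : A ⊗[K] A), a ≠ 0 ∧ b ≠ 0 ∧
      Algebra.TensorProduct.map (IsScalarTower.toAlgHom K A (FractionRing A))
          (IsScalarTower.toAlgHom K A (FractionRing A)) z =
        ((algebraMap A (FractionRing A) a) ⊗ₜ[K] (algebraMap A (FractionRing A) b)) * u := by
  induction u using TensorProduct.induction_on with
  | zero => exact ⟨1, 1, 0, one_ne_zero, one_ne_zero, by simp⟩
  | tmul q r =>
    obtain ⟨a, a', ha⟩ := IsLocalization.exists_integer_multiple (nonZeroDivisors A) q
    obtain ⟨b, b', hb⟩ := IsLocalization.exists_integer_multiple (nonZeroDivisors A) r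
    refine ⟨a, b, a' ⊗ₜ[K] b', nonZeroDivisors.ne_zero a.2, nonZeroDivisors.ne_zero b.2, ?_⟩
    rw [Algebra.TensorProduct.map_tmul]
    rw [Algebra.smul_def] at ha hb
    simp only [IsScalarTower.coe_toAlgHom', ha, hb, Algebra.TensorProduct.tmul_mul_tmul]
  | add x y hx hy =>
    obtain ⟨a₁, b₁, z₁, ha₁, hb₁, h₁⟩ := hx
    obtain ⟨a₂, b₂, z₂, ha₂, hb₂, h₂⟩ := hy
    refine ⟨a₁ * a₂, b₁ * b₂, (a₂ ⊗ₜ[K] b₂) * z₁ + (a₁ ⊗ₜ[K] b₁) * z₂,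
      mul_ne_zero ha₁ ha₂, mul_ne_zero hb₁ hb₂, ?_⟩
    rw [map_add, map_mul, map_mul, Algebra.TensorProduct.map_tmul,
      Algebra.TensorProduct.map_tmul, h₁, h₂]
    rw [map_mul, map_mul, ← Algebra.TensorProduct.tmul_mul_tmul]
    simp only [IsScalarTower.coe_toAlgHom']
    ring

end Frac

section Irred
variable {K : Type*} [Field K] {Q : Type*} [Field Q] [Algebra K Q]

lemma coeff_multiset_prod_X_sub_C_mem {E : Type*} [CommRing E] (S : Subring E)
    (M : Multiset E) (hM : ∀ a ∈ M, a ∈ S) (i : ℕ) :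
    ((M.map fun a => Polynomial.X - Polynomial.C a).prod).coeff i ∈ S := by
  classical
  revert hM i
  refine Multiset.induction_on M ?_ ?_
  · intro _ i
    simp only [Multiset.map_zero, Multiset.prod_zero, Polynomial.coeff_one]
    split <;> simp [S.one_mem, S.zero_mem]
  · intro a M ih hM i
    rw [Multiset.map_cons, Multiset.prod_cons]
    have hq : ∀ j, ((M.map fun a => Polynomial.X - Polynomial.C a).prod).coeff j ∈ S :=
      ih (fun b hb => hM b (Multiset.mem_cons_of_mem hb))
    rw [sub_mul, Polynomial.coeff_sub]
    refine S.sub_mem ?_ ?_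
    · rcases i with _ | j
      · rw [Polynomial.mul_coeff_zero, Polynomial.coeff_X_zero, zero_mul]; exact S.zero_mem
      · rw [Polynomial.coeff_X_mul]; exact hq j
    · rw [Polynomial.coeff_C_mul]; exact S.mul_mem (hM a (Multiset.mem_cons_self a M)) (hq i)

lemma irreducible_map_of_sepClosed
    (Hsep : ∀ α : Q, IsAlgebraic K α → IsSeparable K α → α ∈ (algebraMap K Q).range)
    {f : Polynomial K} (hirr : Irreducible f) (hmon : f.Monic) (hsepf : f.Separable) :
    Irreducible (f.map (algebraMap K Q)) := by
  classical
  set E := AlgebraicClosure Q with hE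
  set fQ := f.map (algebraMap K Q) with hfQ
  have hfQmon : fQ.Monic := hmon.map _
  have hdegeq : fQ.natDegree = f.natDegree := Polynomial.natDegree_map _
  have hfdeg : 0 < f.natDegree := hirr.natDegree_pos
  have hfQu : ¬ IsUnit fQ := Polynomial.not_isUnit_of_natDegree_pos _ (by omega)
  obtain ⟨g, hgmon, hgirr, hgdvd⟩ := Polynomial.exists_monic_irreducible_factor fQ hfQu
  have hgdeg : 0 < g.natDegree := hgirr.natDegree_pos
  set gE := g.map (algebraMap Q E) with hgE
  have hgEmon : gE.Monic := hgmon.map _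
  have hgdeg0 : gE.degree ≠ 0 := by
    rw [hgE, Polynomial.degree_map]
    intro h0
    have h1 := Polynomial.natDegree_eq_zero_iff_degree_le_zero.mpr h0.le
    omega
  obtain ⟨r, hr⟩ := IsAlgClosed.exists_root gE hgdeg0
  have hgr : Polynomial.aeval r g = 0 := by
    rwa [Polynomial.aeval_def, ← Polynomial.eval_map]
  -- roots of gE are separable over K
  have hgEsplit : gE = (gE.roots.map fun a => Polynomial.X - Polynomial.C a).prod :=
    (IsAlgClosed.splits gE).eq_prod_roots_of_monic hgEmon
  have hroots : ∀ a ∈ gE.roots, a ∈ separableClosure K E := by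
    intro a ha
    have hga : Polynomial.aeval a g = 0 := by
      have := Polynomial.isRoot_of_mem_roots ha
      rwa [Polynomial.IsRoot, hgE, Polynomial.eval_map, ← Polynomial.aeval_def] at this
    have hfa : Polynomial.aeval a f = 0 := by
      obtain ⟨c, hc⟩ := hgdvd
      have h1 : Polynomial.aeval a fQ = 0 := by
        rw [hc, map_mul, hga, zero_mul]
      rwa [hfQ, Polynomial.aeval_map_algebraMap] at h1
    have hmin : minpoly K a = f := (minpoly.eq_of_irreducible_of_monic hirr hfa hmon).symm
    rw [mem_separableClosure_iff]
    show (minpoly K a).Separable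
    rw [hmin]; exact hsepf
  -- coefficients of g are in K
  have hcoeff : ∀ i, g.coeff i ∈ Set.range (algebraMap K Q) := by
    intro i
    have h2 : gE.coeff i ∈ separableClosure K E := by
      have := coeff_multiset_prod_X_sub_C_mem
        ((separableClosure K E).toSubalgebra.toSubring) gE.roots
        (fun a ha => hroots a ha) i
      rwa [← hgEsplit] at this
    have h1 : IsSeparable K (algebraMap Q E (g.coeff i)) := by
      rw [← mem_separableClosure_iff]
      rwa [hgE, Polynomial.coeff_map] at h2
    have hminEq : minpoly K (algebraMap Q E (g.coeff i)) = minpoly K (g.coeff i) :=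
      minpoly.algebraMap_eq (algebraMap Q E).injective _
    have hsepq : IsSeparable K (g.coeff i) := by
      show (minpoly K (g.coeff i)).Separable
      rw [← hminEq]; exact h1
    have halgq : IsAlgebraic K (g.coeff i) := by
      rw [isAlgebraic_iff_isIntegral]
      by_contra hni
      have h0 := minpoly.eq_zero hni
      have : (minpoly K (g.coeff i)).Separable := hsepq
      rw [h0] at this
      exact Polynomial.not_separable_zero this
    obtain ⟨k, hk⟩ := Hsep _ halgq hsepq
    exact ⟨k, hk⟩
  have hglift : g ∈ Polynomial.lifts (algebraMap K Q) := by
    rw [Polynomial.lifts_iff_coeff_lifts]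
    exact hcoeff
  obtain ⟨g₀, hg₀map, hg₀deg, hg₀mon⟩ :=
    Polynomial.lifts_and_degree_eq_and_monic hglift hgmon
  have hg₀dvd : g₀ ∣ f := by
    rw [← Polynomial.map_dvd_map (algebraMap K Q) (algebraMap K Q).injective hg₀mon, hg₀map]
    exact hgdvd
  have hg₀deg' : g₀.natDegree = g.natDegree := by
    rw [← hg₀map]; exact (Polynomial.natDegree_map _).symm
  have hg₀u : ¬ IsUnit g₀ :=
    Polynomial.not_isUnit_of_natDegree_pos _ (by omega)
  have hdegf : g.natDegree = f.natDegree := by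
    obtain ⟨c, hc⟩ := hg₀dvd
    rcases hirr.isUnit_or_isUnit hc with hu | hu
    · exact absurd hu hg₀u
    · have hc0 : c.natDegree = 0 := Polynomial.natDegree_eq_zero_of_isUnit hu
      have hcne : c ≠ 0 := fun h0 => hmon.ne_zero (by rw [hc, h0, mul_zero])
      have := congrArg Polynomial.natDegree hc
      rw [Polynomial.natDegree_mul hg₀mon.ne_zero hcne] at this
      omega
  -- conclude
  obtain ⟨c, hc⟩ := hgdvd
  have hcne : c ≠ 0 := fun h0 => hfQmon.ne_zero (by rw [hc, h0, mul_zero])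
  have hcdeg : c.natDegree = 0 := by
    have := congrArg Polynomial.natDegree hc
    rw [Polynomial.natDegree_mul hgmon.ne_zero hcne] at this
    omega
  have hcunit : IsUnit c := by
    rw [Polynomial.isUnit_iff_degree_eq_zero]
    rw [Polynomial.degree_eq_natDegree hcne, hcdeg]; rfl
  have hass : Associated g fQ := ⟨hcunit.unit, by rw [hcunit.unit_spec]; exact hc.symm⟩
  exact hass.irreducible hgirr
end Irred

section P1
variable {K : Type*} [Field K] {A : Type*} [CommRing A] [IsDomain A] [Algebra K A]

theorem sepClosed_of_nilpotent_zeroDivisors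
    (h : ∀ z : A ⊗[K] A, z ∉ nonZeroDivisors (A ⊗[K] A) → IsNilpotent z)
    (α : FractionRing A) (halg : IsAlgebraic K α) (hsep : IsSeparable K α) :
    α ∈ (algebraMap K (FractionRing A)).range := by
  classical
  by_contra hmem
  haveI : Nontrivial (FractionRing A ⊗[K] FractionRing A) :=
    tensor_nontrivial (FractionRing A) (FractionRing A)
  have hint : IsIntegral K α := halg.isIntegral
  set f : Polynomial K := minpoly K α with hfdef
  set n := f.natDegree with hndef
  have hn1 : n ≠ 1 := fun h1 => hmem (minpoly.natDegree_eq_one_iff.mp h1)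
  have hnpos : 0 < n := minpoly.natDegree_pos hint
  have hn2 : 2 ≤ n := by omega
  set fQ : Polynomial (FractionRing A) := f.map (algebraMap K (FractionRing A)) with hfQ
  have hfQmonic : fQ.Monic := (minpoly.monic hint).map _
  have hfQdeg : fQ.natDegree = n := Polynomial.natDegree_map _
  have hfQ0 : fQ ≠ 0 := hfQmonic.ne_zero
  have hroot : fQ.IsRoot α := by
    rw [Polynomial.IsRoot, hfQ, Polynomial.eval_map, ← Polynomial.aeval_def]
    exact minpoly.aeval K α
  set g : Polynomial (FractionRing A) := fQ /ₘ (X - C α) with hg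
  have hfact : (X - C α) * g = fQ := (Polynomial.mul_divByMonic_eq_iff_isRoot).mpr hroot
  have hXα : (X - C α : Polynomial (FractionRing A)) ≠ 0 := Polynomial.X_sub_C_ne_zero α
  have hg0 : g ≠ 0 := fun h0 => hfQ0 (by rw [← hfact, h0, mul_zero])
  have hgdeg : g.natDegree < n := by
    have h2 := congrArg Polynomial.natDegree hfact
    rw [Polynomial.natDegree_mul hXα hg0, Polynomial.natDegree_X_sub_C, hfQdeg] at h2
    omega
  set x : FractionRing A ⊗[K] FractionRing A := (1 : FractionRing A) ⊗ₜ[K] α with hxdef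
  have hx0 : Polynomial.aeval x fQ = 0 := by
    rw [hfQ, Polynomial.aeval_map_algebraMap]
    have hxx : x = Algebra.TensorProduct.includeRight α := rfl
    rw [hxx, Polynomial.aeval_algHom_apply, hfdef, minpoly.aeval, map_zero]
  set β := Polynomial.aeval x (X - C α) with hβ
  set γ := Polynomial.aeval x g with hγ
  have hβγ : β * γ = 0 := by rw [hβ, hγ, ← map_mul, hfact, hx0]
  have hγ0 : γ ≠ 0 := by
    intro h0
    rw [hγ, hxdef] at h0
    have hdvd : fQ ∣ g := aeval_one_tmul_dvd hint h0
    have := Polynomial.natDegree_le_of_dvd hdvd hg0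
    rw [hfQdeg] at this
    omega
  have hβnotnil : ¬ IsNilpotent β := by
    rintro ⟨m, hm⟩
    have hm1 : 1 ≤ m := by
      rcases Nat.eq_zero_or_pos m with h0 | hp
      · rw [h0, pow_zero] at hm; exact absurd hm one_ne_zero
      · exact hp
    have hev : Polynomial.aeval ((1 : FractionRing A) ⊗ₜ[K] α) ((X - C α) ^ m) = 0 := by
      rw [← hxdef, map_pow, ← hβ, hm]
    have hdvd : fQ ∣ (X - C α) ^ m := aeval_one_tmul_dvd hint hev
    rw [← hfact] at hdvd
    obtain ⟨c, hc⟩ := hdvd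
    have hdvd2 : g ∣ (X - C α) ^ (m - 1) := by
      refine ⟨c, mul_left_cancel₀ hXα ?_⟩
      calc (X - C α) * (X - C α) ^ (m - 1) = (X - C α) ^ m := by
            rw [← pow_succ', Nat.sub_add_cancel hm1]
        _ = (X - C α) * (g * c) := by rw [hc]; ring
    obtain ⟨i, _, hassoc⟩ := (dvd_prime_pow (Polynomial.prime_X_sub_C α) _).mp hdvd2
    rcases Nat.eq_zero_or_pos i with h0 | hipos
    · rw [h0, pow_zero] at hassoc
      have hu : IsUnit g := associated_one_iff_isUnit.mp hassoc
      have hg00 : g.natDegree = 0 := Polynomial.natDegree_eq_zero_of_isUnit hu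
      have h2 := congrArg Polynomial.natDegree hfact
      rw [Polynomial.natDegree_mul hXα hg0, Polynomial.natDegree_X_sub_C, hfQdeg, hg00] at h2
      omega
    · have hdvdg : (X - C α) ∣ g :=
        dvd_trans (dvd_pow_self _ hipos.ne') hassoc.symm.dvd
      have hsq : Squarefree fQ := by
        have hsepf : f.Separable := hsep
        exact (hsepf.map).squarefree
      obtain ⟨g', hg'⟩ := hdvdg
      have hdd : (X - C α) * (X - C α) ∣ fQ := ⟨g', by rw [← hfact, hg']; ring⟩
      exact Polynomial.not_isUnit_X_sub_C α (hsq _ hdd)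
  obtain ⟨a, b, z, ha, hb, hz⟩ := exists_clearDenom (K := K) β
  obtain ⟨c, d, w, hc, hd, hw⟩ := exists_clearDenom (K := K) γ
  set φ := Algebra.TensorProduct.map (IsScalarTower.toAlgHom K A (FractionRing A)) (IsScalarTower.toAlgHom K A (FractionRing A))
    with hφ
  have hφinj : Function.Injective φ :=
    tensorMap_injective _ _ (IsFractionRing.injective A (FractionRing A)) (IsFractionRing.injective A (FractionRing A))
  have hsunit := isUnit_tmul_frac (K := K) a b ha hb
  have htunit := isUnit_tmul_frac (K := K) c d hc hd
  have hw0 : w ≠ 0 := by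
    intro h0
    rw [h0, map_zero] at hw
    exact hγ0 ((IsUnit.mul_right_eq_zero htunit).mp hw.symm)
  have hzw : w * z = 0 := by
    apply hφinj
    rw [map_mul, map_zero, hw, hz, mul_mul_mul_comm, mul_comm γ β, hβγ, mul_zero]
  have hznz : z ∉ nonZeroDivisors (A ⊗[K] A) := fun hmem' => hw0 ((mem_nonZeroDivisors_iff.mp hmem').2 w hzw)
  obtain ⟨m, hm⟩ := h z hznz
  apply hβnotnil
  refine ⟨m, ?_⟩
  have h0 : ((algebraMap A (FractionRing A) a) ⊗ₜ[K] (algebraMap A (FractionRing A) b)) ^ m * β ^ m = 0 := by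
    rw [← mul_pow, ← hz, ← map_pow, hm, map_zero]
  exact (IsUnit.mul_right_eq_zero (hsunit.pow m)).mp h0

end P1

section Domain
variable {K : Type*} [Field K] {Q : Type*} [Field Q] [Algebra K Q]

lemma tensor_field_no_zd
    (Hsep : ∀ α : Q, IsAlgebraic K α → IsSeparable K α → α ∈ (algebraMap K Q).range)
    (M : Type*) [Field M] [Algebra K M] [FiniteDimensional K M] [Algebra.IsSeparable K M] :
    ∀ u v : Q ⊗[K] M, u * v = 0 → u = 0 ∨ v = 0 := by
  classical
  obtain ⟨θ, hθtop⟩ := Field.exists_primitive_element K M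
  have hint : IsIntegral K θ := IsIntegral.of_finite K θ
  have hirr : Irreducible (minpoly K θ) := minpoly.irreducible hint
  have hmon : (minpoly K θ).Monic := minpoly.monic hint
  have hsepf : (minpoly K θ).Separable := Algebra.IsSeparable.isSeparable K θ
  have hirrQ : Irreducible ((minpoly K θ).map (algebraMap K Q)) :=
    irreducible_map_of_sepClosed Hsep hirr hmon hsepf
  have hprime : Prime ((minpoly K θ).map (algebraMap K Q)) :=
    UniqueFactorizationMonoid.irreducible_iff_prime.mp hirrQ
  have hx0 : Polynomial.aeval ((1 : Q) ⊗ₜ[K] θ : Q ⊗[K] M)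
      ((minpoly K θ).map (algebraMap K Q)) = 0 := by
    rw [Polynomial.aeval_map_algebraMap]
    have hxx : ((1 : Q) ⊗ₜ[K] θ : Q ⊗[K] M) = Algebra.TensorProduct.includeRight θ := rfl
    rw [hxx, Polynomial.aeval_algHom_apply, minpoly.aeval, map_zero]
  -- surjectivity of aeval at 1 ⊗ θ
  have hadj : Algebra.adjoin Q {((1 : Q) ⊗ₜ[K] θ : Q ⊗[K] M)} = ⊤ := by
    rw [eq_top_iff]
    rintro w -
    induction w using TensorProduct.induction_on with
    | zero => exact Subalgebra.zero_mem _
    | add x y hx hy => exact Subalgebra.add_mem _ hx hy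
    | tmul s m =>
      have h1 : ((1 : Q) ⊗ₜ[K] m : Q ⊗[K] M) ∈
          Algebra.adjoin Q {((1 : Q) ⊗ₜ[K] θ : Q ⊗[K] M)} := by
        have hm : m ∈ Algebra.adjoin K {θ} := by
          rw [← IntermediateField.adjoin_simple_toSubalgebra_of_isAlgebraic hint.isAlgebraic, hθtop]
          trivial
        rw [Algebra.adjoin_singleton_eq_range_aeval] at hm
        obtain ⟨p₀, hp₀⟩ := hm
        have h2 : ((1 : Q) ⊗ₜ[K] m : Q ⊗[K] M) =
            Polynomial.aeval ((1 : Q) ⊗ₜ[K] θ : Q ⊗[K] M) (p₀.map (algebraMap K Q)) := by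
          rw [Polynomial.aeval_map_algebraMap]
          have hxx : ((1 : Q) ⊗ₜ[K] θ : Q ⊗[K] M) = Algebra.TensorProduct.includeRight θ := rfl
          rw [hxx, Polynomial.aeval_algHom_apply]
          have hp₀' : (Polynomial.aeval θ) p₀ = m := hp₀
          rw [hp₀']
          rfl
        rw [h2, Algebra.adjoin_singleton_eq_range_aeval]
        exact ⟨p₀.map (algebraMap K Q), rfl⟩
      have h3 : (s ⊗ₜ[K] m : Q ⊗[K] M) = s • ((1 : Q) ⊗ₜ[K] m) := by
        rw [TensorProduct.smul_tmul', smul_eq_mul, mul_one]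
      rw [h3]
      exact Subalgebra.smul_mem _ h1 s
  have hsurj : Function.Surjective
      (Polynomial.aeval ((1 : Q) ⊗ₜ[K] θ : Q ⊗[K] M) : Polynomial Q →ₐ[Q] Q ⊗[K] M) := by
    intro w
    have hw : w ∈ Algebra.adjoin Q {((1 : Q) ⊗ₜ[K] θ : Q ⊗[K] M)} := by
      rw [hadj]; trivial
    rw [Algebra.adjoin_singleton_eq_range_aeval] at hw
    exact hw
  intro u v huv
  obtain ⟨p, hp⟩ := hsurj u
  obtain ⟨pq, hpq⟩ := hsurj v
  have hev : Polynomial.aeval ((1 : Q) ⊗ₜ[K] θ : Q ⊗[K] M) (p * pq) = 0 := by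
    rw [map_mul, hp, hpq, huv]
  have hdvd := aeval_one_tmul_dvd hint hev
  rcases hprime.2.2 _ _ hdvd with hd | hd
  · left
    obtain ⟨c, hc⟩ := hd
    rw [← hp, hc, map_mul, hx0, zero_mul]
  · right
    obtain ⟨c, hc⟩ := hd
    rw [← hpq, hc, map_mul, hx0, zero_mul]

variable {A : Type*} [CommRing A] [IsDomain A] [Algebra K A]

lemma tensor_MA_no_zd
    (Hsep : ∀ α : FractionRing A, IsAlgebraic K α → IsSeparable K α →
      α ∈ (algebraMap K (FractionRing A)).range)
    (M : Type*) [Field M] [Algebra K M] [FiniteDimensional K M] [Algebra.IsSeparable K M] :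
    ∀ u v : M ⊗[K] A, u * v = 0 → u = 0 ∨ v = 0 := by
  intro u v huv
  set χ₁ : M ⊗[K] A →ₐ[K] M ⊗[K] FractionRing A :=
    Algebra.TensorProduct.map (AlgHom.id K M) (IsScalarTower.toAlgHom K A (FractionRing A))
    with hχ₁
  have hχ₁inj : Function.Injective χ₁ :=
    tensorMap_injective _ _ (fun a b h => h) (IsFractionRing.injective A (FractionRing A))
  set χ₂ := Algebra.TensorProduct.comm K M (FractionRing A) with hχ₂
  have h0 : (χ₂ (χ₁ u)) * (χ₂ (χ₁ v)) = 0 := by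
    rw [← map_mul, ← map_mul, huv, map_zero, map_zero]
  rcases tensor_field_no_zd Hsep M (χ₂ (χ₁ u)) (χ₂ (χ₁ v)) h0 with h | h
  · left
    exact hχ₁inj (χ₂.injective (by rw [h, map_zero, map_zero]))
  · right
    exact hχ₁inj (χ₂.injective (by rw [h, map_zero, map_zero]))

omit [IsDomain A] in
lemma exists_finset_adjoin_mem {F : Type*} [Field F] [Algebra K F] (u : F ⊗[K] A) :
    ∃ s : Finset F, ∀ (L : IntermediateField K F), (↑s : Set F) ⊆ L →
      u ∈ (Algebra.TensorProduct.map L.val (AlgHom.id K A)).range := by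
  classical
  induction u using TensorProduct.induction_on with
  | zero => exact ⟨∅, fun L _ => Subalgebra.zero_mem _⟩
  | tmul c a =>
    refine ⟨{c}, fun L hL => ?_⟩
    have hc : c ∈ L := hL (by simp)
    exact ⟨(⟨c, hc⟩ : L) ⊗ₜ[K] a, by simp [Algebra.TensorProduct.map_tmul]⟩
  | add x y hx hy =>
    obtain ⟨s₁, h₁⟩ := hx
    obtain ⟨s₂, h₂⟩ := hy
    refine ⟨s₁ ∪ s₂, fun L hL => ?_⟩
    refine Subalgebra.add_mem _ ?_ ?_
    · exact h₁ L (fun x hx' => hL (Finset.coe_subset.mpr Finset.subset_union_left hx'))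
    · exact h₂ L (fun x hx' => hL (Finset.coe_subset.mpr Finset.subset_union_right hx'))

end Domain

section Assembly
variable {K : Type*} [Field K] {A : Type*} [CommRing A] [IsDomain A] [Algebra K A]

lemma FA_no_zd
    (Hsep : ∀ α : FractionRing A, IsAlgebraic K α → IsSeparable K α →
      α ∈ (algebraMap K (FractionRing A)).range)
    (F : Type*) [Field F] [Algebra K F] [Algebra.IsSeparable K F] :
    ∀ u v : F ⊗[K] A, u * v = 0 → u = 0 ∨ v = 0 := by
  classical
  intro u v huv
  obtain ⟨su, hsu⟩ := exists_finset_adjoin_mem u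
  obtain ⟨sv, hsv⟩ := exists_finset_adjoin_mem v
  set L : IntermediateField K F := IntermediateField.adjoin K (↑(su ∪ sv) : Set F) with hLdef
  haveI : FiniteDimensional K L := by
    apply IntermediateField.finiteDimensional_adjoin
    intro x _
    exact (Algebra.IsSeparable.isSeparable K (x : F)).isIntegral
  haveI : Algebra.IsSeparable K L := Algebra.isSeparable_tower_bot_of_isSeparable K L F
  have hsub : (↑(su ∪ sv) : Set F) ⊆ L := IntermediateField.subset_adjoin K _
  obtain ⟨u', hu'⟩ := hsu L (fun x hx => hsub (by
    rw [Finset.coe_union]; exact Set.mem_union_left _ hx))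
  obtain ⟨v', hv'⟩ := hsv L (fun x hx => hsub (by
    rw [Finset.coe_union]; exact Set.mem_union_right _ hx))
  have hinj : Function.Injective (Algebra.TensorProduct.map L.val (AlgHom.id K A)) :=
    tensorMap_injective _ _ L.val.toRingHom.injective (fun a b h => h)
  have hu2 : (Algebra.TensorProduct.map L.val (AlgHom.id K A)) u' = u := hu'
  have hv2 : (Algebra.TensorProduct.map L.val (AlgHom.id K A)) v' = v := hv'
  have huv' : u' * v' = 0 := by
    apply hinj
    rw [map_mul, hu2, hv2, huv, map_zero]
  rcases tensor_MA_no_zd Hsep (↥L) u' v' huv' with h | h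
  · left; rw [← hu2, h, map_zero]
  · right; rw [← hv2, h, map_zero]

lemma pow_eq_zero_domainlike {R : Type*} [CommRing R] [Nontrivial R]
    (hdom : ∀ u v : R, u * v = 0 → u = 0 ∨ v = 0) {z : R} {s : ℕ} (hz : z ^ s = 0) : z = 0 := by
  induction s with
  | zero => rw [pow_zero] at hz; exact absurd hz one_ne_zero
  | succ s ih =>
    rw [pow_succ] at hz
    rcases hdom _ _ hz with h | h
    · exact ih h
    · exact h

theorem nilpotent_or_of_mul_nilpotent
    (Hsep : ∀ α : FractionRing A, IsAlgebraic K α → IsSeparable K α →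
      α ∈ (algebraMap K (FractionRing A)).range)
    (Kbar : Type*) [Field Kbar] [Algebra K Kbar]
    (F : Type*) [Field F] [Algebra K F] [Algebra F Kbar] [IsScalarTower K F Kbar]
    [Algebra.IsSeparable K F] [IsPurelyInseparable F Kbar]
    (x y : Kbar ⊗[K] A) (hxy : IsNilpotent (x * y)) :
    IsNilpotent x ∨ IsNilpotent y := by
  classical
  haveI : Nontrivial (Kbar ⊗[K] A) := tensor_nontrivial Kbar A
  haveI : Nontrivial (F ⊗[K] A) := tensor_nontrivial F A
  obtain ⟨q, hq⟩ := ExpChar.exists K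
  haveI := hq
  haveI : ExpChar (Kbar ⊗[K] A) q :=
    expChar_of_injective_algebraMap (algebraMap K (Kbar ⊗[K] A)).injective q
  haveI : ExpChar F q := expChar_of_injective_algebraMap (algebraMap K F).injective q
  set Φ : F ⊗[K] A →ₐ[K] Kbar ⊗[K] A :=
    Algebra.TensorProduct.map (IsScalarTower.toAlgHom K F Kbar) (AlgHom.id K A) with hΦ
  have hΦinj : Function.Injective Φ :=
    tensorMap_injective _ _ (IsScalarTower.toAlgHom K F Kbar).toRingHom.injective
      (fun a b h => h)
  have stepA : ∀ t : Kbar ⊗[K] A, ∃ (n : ℕ) (w : F ⊗[K] A), Φ w = t ^ q ^ n := by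
    intro t
    induction t using TensorProduct.induction_on with
    | zero =>
      exact ⟨0, 0, by simp⟩
    | tmul c a =>
      obtain ⟨n, hn⟩ := IsPurelyInseparable.pow_mem F q c
      obtain ⟨y0, hy0⟩ := hn
      refine ⟨n, y0 ⊗ₜ[K] (a ^ q ^ n), ?_⟩
      rw [hΦ, Algebra.TensorProduct.map_tmul, Algebra.TensorProduct.tmul_pow]
      have h5 : (IsScalarTower.toAlgHom K F Kbar) y0 = c ^ q ^ n := hy0
      rw [h5]
      rfl
    | add s t hs ht =>
      obtain ⟨n₁, w₁, h₁⟩ := hs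
      obtain ⟨n₂, w₂, h₂⟩ := ht
      refine ⟨n₁ + n₂, w₁ ^ q ^ n₂ + w₂ ^ q ^ n₁, ?_⟩
      rw [map_add, map_pow, map_pow, h₁, h₂, add_pow_expChar_pow,
        ← pow_mul, ← pow_mul, ← pow_add, ← pow_add, Nat.add_comm n₂ n₁]
  obtain ⟨m, hm⟩ := hxy
  obtain ⟨n₁, w₁, h₁⟩ := stepA x
  obtain ⟨n₂, w₂, h₂⟩ := stepA y
  set N := q ^ (n₁ + n₂) with hN
  have hxN : Φ (w₁ ^ q ^ n₂) = x ^ N := by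
    rw [map_pow, h₁, ← pow_mul, ← pow_add]
  have hyN : Φ (w₂ ^ q ^ n₁) = y ^ N := by
    rw [map_pow, h₂, ← pow_mul, ← pow_add, Nat.add_comm n₂ n₁]
  have hnil : (Φ (w₁ ^ q ^ n₂ * w₂ ^ q ^ n₁)) ^ m = 0 := by
    rw [map_mul, hxN, hyN, ← mul_pow, ← pow_mul, mul_comm N m, pow_mul, hm]
    have hN0 : N ≠ 0 := pow_ne_zero _ (expChar_pos K q).ne'
    exact zero_pow hN0
  have hzs : (w₁ ^ q ^ n₂ * w₂ ^ q ^ n₁) ^ m = 0 := by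
    apply hΦinj
    rw [map_pow, hnil, map_zero]
  have hz0 : w₁ ^ q ^ n₂ * w₂ ^ q ^ n₁ = 0 :=
    pow_eq_zero_domainlike (FA_no_zd Hsep F) hzs
  rcases FA_no_zd Hsep F _ _ hz0 with h | h
  · left
    refine ⟨N, ?_⟩
    rw [← hxN, h, map_zero]
  · right
    refine ⟨N, ?_⟩
    rw [← hyN, h, map_zero]

end Assembly

end AuxiliaryLemmas

/-- Let `K` be a field and `A` a commutative `K`-algebra which is an
integral domain, such that every zero divisor of `A ⊗[K] A` is nilpotent. Then `K` is
separably closed in the fraction field `Q` of `A` (every element of `Q` separable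
algebraic over `K` lies in `K`), and consequently `Spec A` is geometrically irreducible
over `K`, i.e. `Spec (K̄ ⊗[K] A)` is irreducible for an algebraic closure `K̄` of `K`. -/
theorem separablyClosed_and_geometricallyIrreducible
    (K : Type*) [Field K] (A : Type*) [CommRing A] [IsDomain A] [Algebra K A]
    (h : ∀ z : A ⊗[K] A, z ∉ nonZeroDivisors (A ⊗[K] A) → IsNilpotent z) :
    (∀ α : FractionRing A, IsAlgebraic K α → IsSeparable K α →
        α ∈ (algebraMap K (FractionRing A)).range) ∧
      IrreducibleSpace (PrimeSpectrum (AlgebraicClosure K ⊗[K] A)) := by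
  have Hsep : ∀ α : FractionRing A, IsAlgebraic K α → IsSeparable K α →
      α ∈ (algebraMap K (FractionRing A)).range :=
    fun α ha hs => sepClosed_of_nilpotent_zeroDivisors h α ha hs
  refine ⟨Hsep, ?_⟩
  haveI : Nontrivial (AlgebraicClosure K ⊗[K] A) := tensor_nontrivial _ _
  have hP : (nilradical (AlgebraicClosure K ⊗[K] A)).IsPrime := by
    rw [Ideal.isPrime_iff]
    constructor
    · intro htop
      have h1 : IsNilpotent (1 : AlgebraicClosure K ⊗[K] A) := by
        rw [← mem_nilradical, htop]; trivial
      obtain ⟨k, hk⟩ := h1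
      rw [one_pow] at hk
      exact one_ne_zero hk
    · intro a b hab
      rw [mem_nilradical] at hab
      rcases nilpotent_or_of_mul_nilpotent Hsep (AlgebraicClosure K)
          (↥(separableClosure K (AlgebraicClosure K))) a b hab with h' | h'
      · exact Or.inl (mem_nilradical.mpr h')
      · exact Or.inr (mem_nilradical.mpr h')
  rw [irreducibleSpace_def, Set.top_eq_univ, ← PrimeSpectrum.zeroLocus_bot,
    PrimeSpectrum.isIrreducible_zeroLocus_iff]
  exact hP
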